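/- Let C be a bi-closed monoidal category, f : A → B an epimorphism and g : C → D a regular epimorphism. Then (B ⊗ D, B ⊗ g, f ⊗ D) is the pushout of the pair (f ⊗ C : A ⊗ C → B ⊗ C, A ⊗ g : A ⊗ C → A ⊗ D). -/

import Mathlib

open CategoryTheory CategoryTheory.MonoidalCategory CategoryTheory.Limits

universe v u

/-- In a bi-closed monoidal category, if `f : A ⟶ B` is an epimorphism and
`g : X ⟶ Y` a regular epimorphism, then `(B ⊗ Y, B ⊗ g, f ⊗ Y)` is the pushout
of the pair `(f ⊗ X : A ⊗ X ⟶ B ⊗ X, A ⊗ g : A ⊗ X ⟶ A ⊗ Y)`. -/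
theorem pushout_tensor_biclosed {C : Type u} [Category.{v} C] [MonoidalCategory C]
    [MonoidalClosed C] [∀ X : C, (tensorRight X).IsLeftAdjoint]
    {A B X Y : C} (f : A ⟶ B) (g : X ⟶ Y) [Epi f] [IsRegularEpi g] :
    IsPushout (f ▷ X) (A ◁ g) (B ◁ g) (f ▷ Y) := by
  -- tensorLeft and tensorRight preserve colimits (hence epis)
  haveI : ∀ Z : C, PreservesColimitsOfSize.{0,0} (tensorLeft Z) := fun Z =>
    (ihom.adjunction Z).leftAdjoint_preservesColimits
  haveI : ∀ Z : C, PreservesColimitsOfSize.{0,0} (tensorRight Z) := fun Z =>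
    (Adjunction.ofIsLeftAdjoint (tensorRight Z)).leftAdjoint_preservesColimits
  -- epi instances
  haveI hfX : Epi (f ▷ X) := (tensorRight X).map_epi f
  haveI hAg : Epi (A ◁ g) := (tensorLeft A).map_epi g
  haveI hBg : Epi (B ◁ g) := (tensorLeft B).map_epi g
  haveI hfW : Epi (f ▷ IsRegularEpi.W g) := (tensorRight (IsRegularEpi.W g)).map_epi f
  -- B ◁ g is a coequalizer of B ◁ left, B ◁ right
  have hw : (IsRegularEpi.left g : IsRegularEpi.W g ⟶ X) ≫ g = IsRegularEpi.right g ≫ g := IsRegularEpi.w g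
  have hcolim : IsColimit (Cofork.ofπ ((tensorLeft B).map g)
      (by rw [← Functor.map_comp, ← Functor.map_comp, hw]) :
      Cofork ((tensorLeft B).map (IsRegularEpi.left g)) ((tensorLeft B).map (IsRegularEpi.right g))) :=
    isColimitCoforkMapOfIsColimit (tensorLeft B) hw (IsRegularEpi.isColimit g)
  have exch : f ▷ X ≫ B ◁ g = A ◁ g ≫ f ▷ Y := (whisker_exchange f g).symm
  have key : ∀ s : PushoutCocone (f ▷ X) (A ◁ g),
      (tensorLeft B).map (IsRegularEpi.left g : IsRegularEpi.W g ⟶ X) ≫ s.inl =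
        (tensorLeft B).map (IsRegularEpi.right g : IsRegularEpi.W g ⟶ X) ≫ s.inl := by
    intro s
    rw [← cancel_epi (f ▷ IsRegularEpi.W g)]
    simp only [curriedTensor_obj_obj, curriedTensor_obj_map]
    rw [← whisker_exchange_assoc, ← whisker_exchange_assoc, s.condition,
      ← MonoidalCategory.whiskerLeft_comp_assoc, ← MonoidalCategory.whiskerLeft_comp_assoc, hw]
  have fac : ∀ s : PushoutCocone (f ▷ X) (A ◁ g),
      B ◁ g ≫ Cofork.IsColimit.desc hcolim s.inl (key s) = s.inl := fun s => by
    simpa using Cofork.IsColimit.π_desc' hcolim s.inl (key s)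
  refine ⟨⟨exch⟩, ⟨PushoutCocone.IsColimit.mk exch
    (fun s => Cofork.IsColimit.desc hcolim s.inl (key s)) (fun s => fac s) (fun s => ?_)
    (fun s m h₁ h₂ => ?_)⟩⟩
  · rw [← cancel_epi (A ◁ g), ← Category.assoc, ← exch, Category.assoc, fac s, s.condition]
  · rw [← cancel_epi (B ◁ g), fac s, h₁]
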